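/- Fix β > 0, n, m ∈ ℕ with n < m, and L > 0. Let β_fn : ℝ^n × ℝ^n → ℂ be a Schwartz function. Then ∫_{Λ_L^m} |N_{L,m}^{(n)}(β_fn)(p,q)|² dμ_L^m(p,q) ≤ m^{2n} · L^{−n} · ∫_{ℝ^n} ∫_{ℝ^n} |β_fn(p',q')|² dq' dμ̆^n(p'). -/

import Mathlib

open MeasureTheory

/-- The Maxwellian probability measure `μ̆` on `ℝ`, with density `(β/π)^{1/2} e^{-βp²}`. -/
noncomputable def maxwellMeasure (β : ℝ) : Measure ℝ :=
  volume.withDensity fun p => ENNReal.ofReal (Real.sqrt (β / Real.pi) * Real.exp (-β * p ^ 2))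

/-- The canonical Gibbs measure on `Λ_L^m = ℝ^m × [-L/2,L/2)^m` with density
`L^{-m} (β/π)^{m/2} e^{-β|p|²}` with respect to Lebesgue measure `dp dq`. -/
noncomputable def gibbsMeasure (β L : ℝ) (m : ℕ) :
    Measure ((Fin m → ℝ) × (Fin m → ℝ)) :=
  (((volume : Measure ((Fin m → ℝ) × (Fin m → ℝ))).restrict
      (Set.univ ×ˢ Set.univ.pi fun _ : Fin m => Set.Ico (-L / 2) (L / 2))).withDensity
    fun pq => ENNReal.ofReal
      (L ^ (-(m : ℝ)) * (β / Real.pi) ^ ((m : ℝ) / 2) * Real.exp (-β * ∑ i, pq.1 i ^ 2)))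

/-- The symmetrization `N_{L,m}^{(n)}(β_fn)(p,q) = Σ β_fn(p_{j_1},…,p_{j_n},q_{j_1},…,q_{j_n})`,
summed over `n`-tuples of pairwise distinct indices in `{1,…,m}`. -/
noncomputable def symmetrize (n m : ℕ) (f : ((Fin n → ℝ) × (Fin n → ℝ)) → ℂ)
    (p q : Fin m → ℝ) : ℂ :=
  ∑ j ∈ Finset.univ.filter (fun j : Fin n → Fin m => Function.Injective j),
    f (p ∘ j, q ∘ j)

section SymmetrizeAux

open ENNReal Set

lemma lintegral_pi_prod : ∀ (k : ℕ) (μ : Fin k → Measure ℝ) [∀ i, SigmaFinite (μ i)]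
    (f : Fin k → ℝ → ℝ≥0∞), (∀ i, Measurable (f i)) →
    ∫⁻ x, ∏ i, f i (x i) ∂(Measure.pi μ) = ∏ i, ∫⁻ t, f i t ∂(μ i) := by
  intro k
  induction k with
  | zero => intro μ _ f hf; simp
  | succ k ih =>
    intro μ _ f hf
    have hmp := measurePreserving_piFinSuccAbove μ 0
    have hmeas : Measurable fun yz : ℝ × (Fin k → ℝ) => f 0 yz.1 * ∏ i, f (Fin.succ i) (yz.2 i) := by
      apply Measurable.mul
      · exact (hf 0).comp measurable_fst
      · exact Finset.measurable_prod _ fun i _ =>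
          ((hf i.succ).comp ((measurable_pi_apply i).comp measurable_snd))
    have h1 : ∫⁻ x, ∏ i, f i (x i) ∂(Measure.pi μ)
        = ∫⁻ yz : ℝ × (Fin k → ℝ), f 0 yz.1 * ∏ i, f (Fin.succ i) (yz.2 i)
            ∂((μ 0).prod (Measure.pi fun i : Fin k => μ ((0 : Fin (k+1)).succAbove i))) := by
      rw [← hmp.lintegral_comp hmeas]
      congr 1
      funext x
      simp [Fin.prod_univ_succ, Fin.tail, MeasurableEquiv.piFinSuccAbove]
    have hg : Measurable fun z : Fin k → ℝ => ∏ i, f (Fin.succ i) (z i) :=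
      Finset.measurable_prod _ fun i _ => ((hf i.succ).comp (measurable_pi_apply i))
    have h2 : (Measure.pi fun i : Fin k => μ ((0 : Fin (k+1)).succAbove i))
        = Measure.pi fun i : Fin k => μ i.succ := by congr
    rw [h1, h2, lintegral_prod _ hmeas.aemeasurable]
    simp_rw [lintegral_const_mul _ hg]
    rw [lintegral_mul_const _ (hf 0),
      ih (fun i => μ i.succ) (fun i => f i.succ) (fun i => hf i.succ),
      Fin.prod_univ_succ, mul_comm]

lemma pi_restrict' (k : ℕ) (μ : Measure ℝ) [SigmaFinite μ] {s : Fin k → Set ℝ}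
    (hs : ∀ i, MeasurableSet (s i)) :
    Measure.pi (fun i : Fin k => μ.restrict (s i))
      = (Measure.pi fun _ : Fin k => μ).restrict (Set.univ.pi s) := by
  refine Measure.pi_eq fun t ht => ?_
  rw [Measure.restrict_apply (MeasurableSet.univ_pi ht), ← Set.pi_inter_distrib, Measure.pi_pi]
  exact Finset.prod_congr rfl fun i _ => (Measure.restrict_apply (ht i)).symm

lemma lintegral_comp_proj {n m : ℕ} (μ : Measure ℝ) [IsFiniteMeasure μ]
    {j : Fin n → Fin m} (hj : Function.Injective j)
    {H : (Fin n → ℝ) → ℝ≥0∞} (hH : Measurable H) :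
    ∫⁻ x, H (x ∘ j) ∂(Measure.pi fun _ : Fin m => μ)
      = (μ Set.univ) ^ (m - n) * ∫⁻ y, H y ∂(Measure.pi fun _ : Fin n => μ) := by
  classical
  have hcard : Fintype.card ↥(Set.range j)ᶜ = m - n := by
    rw [Fintype.card_compl_set, Set.card_range_of_injective hj]
    simp
  let eC : Fin (m - n) ≃ ↥(Set.range j)ᶜ := Fintype.equivOfCardEq (by simp [hcard])
  let e : Fin n ⊕ Fin (m - n) ≃ Fin m :=
    ((Equiv.ofInjective j hj).sumCongr eC).trans (Equiv.Set.sumCompl (Set.range j))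
  have he : ∀ i, e (Sum.inl i) = j i := fun i => by
    simp [e, Equiv.Set.sumCompl_apply_inl]
  have hmj : Measurable fun x : Fin m → ℝ => H (x ∘ j) :=
    hH.comp (measurable_pi_lambda _ fun i => measurable_pi_apply (j i))
  have h1 := (measurePreserving_piCongrLeft (fun _ : Fin m => μ) e).lintegral_comp hmj
  rw [← h1]
  have h2 : ∀ y : (Fin n ⊕ Fin (m - n)) → ℝ,
      ((MeasurableEquiv.piCongrLeft (fun _ => ℝ) e) y) ∘ j = fun i => y (Sum.inl i) := by
    intro y
    funext i
    rw [Function.comp_apply, ← he i, MeasurableEquiv.piCongrLeft_apply_apply]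
  simp_rw [h2]
  have hmf : Measurable fun ab : (Fin n → ℝ) × (Fin (m - n) → ℝ) => H ab.1 :=
    hH.comp measurable_fst
  have h3 := (measurePreserving_sumPiEquivProdPi
    (fun _ : Fin n ⊕ Fin (m - n) => μ)).lintegral_comp hmf
  have h4 : ∀ y : (Fin n ⊕ Fin (m - n)) → ℝ,
      ((MeasurableEquiv.sumPiEquivProdPi (fun _ => ℝ)) y).1 = fun i => y (Sum.inl i) :=
    fun y => rfl
  simp_rw [h4] at h3
  rw [h3, lintegral_prod _ hmf.aemeasurable]
  simp_rw [lintegral_const]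
  rw [lintegral_mul_const _ hH, Measure.pi_univ, Finset.prod_const, Finset.card_univ,
    Fintype.card_fin, mul_comm]

lemma pi_withDensity (k : ℕ) (μ : Measure ℝ) [SigmaFinite μ] {f : ℝ → ℝ≥0∞}
    (hf : Measurable f) [SigmaFinite (μ.withDensity f)] :
    Measure.pi (fun _ : Fin k => μ.withDensity f)
      = (Measure.pi fun _ : Fin k => μ).withDensity (fun x => ∏ i, f (x i)) := by
  refine Measure.pi_eq fun s hs => ?_
  rw [withDensity_apply _ (MeasurableSet.univ_pi hs), ← pi_restrict' k μ hs,
    lintegral_pi_prod k _ (fun _ => f) (fun _ => hf)]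
  exact Finset.prod_congr rfl fun i _ => (withDensity_apply f (hs i)).symm

lemma maxwell_prob {β : ℝ} (hβ : 0 < β) : IsProbabilityMeasure (maxwellMeasure β) := by
  constructor
  rw [maxwellMeasure, withDensity_apply _ MeasurableSet.univ, Measure.restrict_univ]
  have hint : Integrable fun p : ℝ => Real.sqrt (β / Real.pi) * Real.exp (-β * p ^ 2) :=
    (integrable_exp_neg_mul_sq hβ).const_mul _
  rw [← ofReal_integral_eq_lintegral_ofReal hint (ae_of_all _ fun p => by positivity)]
  rw [MeasureTheory.integral_const_mul, integral_gaussian]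
  rw [← Real.sqrt_mul (by positivity)]
  rw [show β / Real.pi * (Real.pi / β) = 1 by field_simp]
  simp

lemma density_factor {β : ℝ} (hβ : 0 < β) {m : ℕ} (p : Fin m → ℝ) :
    ENNReal.ofReal ((β / Real.pi) ^ ((m : ℝ) / 2) * Real.exp (-β * ∑ i, p i ^ 2))
      = ∏ i, ENNReal.ofReal (Real.sqrt (β / Real.pi) * Real.exp (-β * p i ^ 2)) := by
  rw [← ENNReal.ofReal_prod_of_nonneg (fun i _ => by positivity)]
  congr 1
  rw [Finset.prod_mul_distrib, Finset.prod_const, ← Real.exp_sum]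
  congr 1
  · rw [Real.sqrt_eq_rpow, Finset.card_univ, Fintype.card_fin,
      ← Real.rpow_natCast ((β / Real.pi) ^ ((1:ℝ)/2)) m, ← Real.rpow_mul (by positivity)]
    congr 1
    ring
  · rw [← Finset.mul_sum]

lemma key_bound {β L : ℝ} (hβ : 0 < β) (hL : 0 < L) {n m : ℕ} (hnm : n ≤ m)
    {j : Fin n → Fin m} (hj : Function.Injective j)
    {g : ((Fin n → ℝ) × (Fin n → ℝ)) → ℝ≥0∞} (hg : Measurable g) :
    ∫⁻ pq, g (pq.1 ∘ j, pq.2 ∘ j) ∂(gibbsMeasure β L m)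
      ≤ ENNReal.ofReal ((L ^ n)⁻¹) *
        ∫⁻ p', (∫⁻ q', g (p', q')) ∂(Measure.pi fun _ : Fin n => maxwellMeasure β) := by
  classical
  haveI hmp : IsProbabilityMeasure (maxwellMeasure β) := maxwell_prob hβ
  haveI : SigmaFinite (maxwellMeasure β) := inferInstance
  set d : ℝ → ℝ≥0∞ := fun t => ENNReal.ofReal (Real.sqrt (β / Real.pi) * Real.exp (-β * t ^ 2))
    with hd_def
  have hd : Measurable d := by
    apply Measurable.ennreal_ofReal; fun_prop
  set I : Set ℝ := Set.Ico (-L / 2) (L / 2) with hI_def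
  have hImeas : MeasurableSet I := measurableSet_Ico
  have hIuniv : (volume : Measure ℝ).restrict I Set.univ = ENNReal.ofReal L := by
    rw [Measure.restrict_apply_univ, hI_def, Real.volume_Ico]
    congr 1
    ring
  haveI : IsFiniteMeasure ((volume : Measure ℝ).restrict I) := by
    constructor
    rw [hIuniv]
    exact ENNReal.ofReal_lt_top
  have hρ : Measurable (fun pq : (Fin m → ℝ) × (Fin m → ℝ) => ENNReal.ofReal
      (L ^ (-(m : ℝ)) * (β / Real.pi) ^ ((m : ℝ) / 2) * Real.exp (-β * ∑ i, pq.1 i ^ 2))) := by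
    apply Measurable.ennreal_ofReal; fun_prop
  have hcomp : Measurable fun pq : (Fin m → ℝ) × (Fin m → ℝ) => (pq.1 ∘ j, pq.2 ∘ j) := by
    apply Measurable.prod
    · exact measurable_pi_lambda _ fun i => (measurable_pi_apply (j i)).comp measurable_fst
    · exact measurable_pi_lambda _ fun i => (measurable_pi_apply (j i)).comp measurable_snd
  have hF : Measurable fun pq : (Fin m → ℝ) × (Fin m → ℝ) => g (pq.1 ∘ j, pq.2 ∘ j) :=
    hg.comp hcomp
  set V : (Fin n → ℝ) → ℝ≥0∞ := fun p' => ∫⁻ q', g (p', q') with hV_def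
  have hV : Measurable V := hg.lintegral_prod_right'
  rw [gibbsMeasure, lintegral_withDensity_eq_lintegral_mul _ hρ hF,
    Measure.volume_eq_prod, ← Measure.prod_restrict, Measure.restrict_univ]
  simp only [Pi.mul_apply]
  rw [lintegral_prod _ (show Measurable (fun pq : (Fin m → ℝ) × (Fin m → ℝ) => ENNReal.ofReal
      (L ^ (-(m : ℝ)) * (β / Real.pi) ^ ((m : ℝ) / 2) * Real.exp (-β * ∑ i, pq.1 i ^ 2)) *
        g (pq.1 ∘ j, pq.2 ∘ j)) from hρ.mul hF).aemeasurable]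
  -- inner bound
  have hbox : ((volume : Measure (Fin m → ℝ)).restrict (Set.univ.pi fun _ : Fin m => I))
      = Measure.pi (fun _ : Fin m => (volume : Measure ℝ).restrict I) := by
    rw [pi_restrict' m volume fun _ => hImeas, volume_pi]
  have inner_bound : ∀ p : Fin m → ℝ,
      (∫⁻ q, ENNReal.ofReal (L ^ (-(m : ℝ)) * (β / Real.pi) ^ ((m : ℝ) / 2)
          * Real.exp (-β * ∑ i, p i ^ 2)) * g (p ∘ j, q ∘ j)
        ∂((volume : Measure (Fin m → ℝ)).restrict (Set.univ.pi fun _ : Fin m => I)))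
      ≤ ENNReal.ofReal (L ^ (-(m : ℝ)) * (β / Real.pi) ^ ((m : ℝ) / 2)
          * Real.exp (-β * ∑ i, p i ^ 2)) * (ENNReal.ofReal L ^ (m - n) * V (p ∘ j)) := by
    intro p
    have hgq : Measurable fun q : Fin m → ℝ => g (p ∘ j, q ∘ j) :=
      (hg.comp measurable_prodMk_left).comp
        (measurable_pi_lambda _ fun i => measurable_pi_apply (j i))
    rw [lintegral_const_mul _ hgq]
    apply mul_le_mul_right
    rw [hbox]
    refine le_trans (le_of_eq (lintegral_comp_proj _ hj (H := fun y => g (p ∘ j, y))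
      (hg.comp measurable_prodMk_left))) ?_
    rw [hIuniv]
    apply mul_le_mul_right
    rw [pi_restrict' n volume fun _ => hImeas]
    calc ∫⁻ y, g (p ∘ j, y)
          ∂((Measure.pi fun _ : Fin n => (volume : Measure ℝ)).restrict
              (Set.univ.pi fun _ => I))
        ≤ ∫⁻ y, g (p ∘ j, y) ∂(Measure.pi fun _ : Fin n => (volume : Measure ℝ)) :=
          lintegral_mono' Measure.restrict_le_self le_rfl
      _ = V (p ∘ j) := by rw [← volume_pi]
  refine le_trans (lintegral_mono inner_bound) ?_
  -- now pure p-integral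
  have hsplit : ∀ p : Fin m → ℝ,
      ENNReal.ofReal (L ^ (-(m : ℝ)) * (β / Real.pi) ^ ((m : ℝ) / 2)
          * Real.exp (-β * ∑ i, p i ^ 2))
        = ENNReal.ofReal (L ^ (-(m : ℝ))) * ∏ i, d (p i) := by
    intro p
    rw [mul_assoc, ENNReal.ofReal_mul (by positivity), density_factor hβ]
  have hprod : Measurable fun p : Fin m → ℝ => ∏ i, d (p i) :=
    Finset.measurable_prod _ fun i _ => hd.comp (measurable_pi_apply i)
  have hVj : Measurable fun p : Fin m → ℝ => V (p ∘ j) :=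
    hV.comp (measurable_pi_lambda _ fun i => measurable_pi_apply (j i))
  have step : (∫⁻ p, ENNReal.ofReal (L ^ (-(m : ℝ)) * (β / Real.pi) ^ ((m : ℝ) / 2)
          * Real.exp (-β * ∑ i, p i ^ 2)) * (ENNReal.ofReal L ^ (m - n) * V (p ∘ j)))
      = (ENNReal.ofReal (L ^ (-(m : ℝ))) * ENNReal.ofReal L ^ (m - n)) *
          ∫⁻ p, (∏ i, d (p i)) * V (p ∘ j) := by
    rw [← lintegral_const_mul _ (show Measurable fun p : Fin m → ℝ => (∏ i, d (p i)) * V (p ∘ j)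
      from hprod.mul hVj)]
    congr 1
    funext p
    rw [hsplit p]
    ring
  rw [step]
  have hgauss : (∫⁻ p : Fin m → ℝ, (∏ i, d (p i)) * V (p ∘ j))
      = ∫⁻ p', V p' ∂(Measure.pi fun _ : Fin n => maxwellMeasure β) := by
    haveI : SigmaFinite ((volume : Measure ℝ).withDensity d) := by
      rw [show (volume : Measure ℝ).withDensity d = maxwellMeasure β from rfl]
      infer_instance
    have e1 : (∫⁻ p : Fin m → ℝ, (∏ i, d (p i)) * V (p ∘ j))
        = ∫⁻ p, V (p ∘ j)
            ∂((volume : Measure (Fin m → ℝ)).withDensity fun p => ∏ i, d (p i)) :=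
      (lintegral_withDensity_eq_lintegral_mul _ hprod hVj).symm
    rw [e1]
    rw [show ((volume : Measure (Fin m → ℝ))).withDensity (fun p => ∏ i, d (p i))
        = Measure.pi (fun _ : Fin m => maxwellMeasure β) by
      rw [volume_pi, ← pi_withDensity m volume hd]
      rfl]
    rw [lintegral_comp_proj _ hj hV]
    simp
  rw [hgauss]
  apply mul_le_mul_left
  have hL1 : ENNReal.ofReal (L ^ (-(m : ℝ))) * ENNReal.ofReal L ^ (m - n)
      = ENNReal.ofReal ((L ^ n)⁻¹) := by
    rw [← ENNReal.ofReal_pow hL.le, ← ENNReal.ofReal_mul (by positivity)]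
    congr 1
    rw [Real.rpow_neg hL.le, Real.rpow_natCast]
    have hLne : L ≠ 0 := hL.ne'
    field_simp
    rw [← pow_add]
    congr 1
    omega
  rw [hL1]

end SymmetrizeAux

open ENNReal Set in
/-- Lemma 4.2, first claim:
`∫_{Λ_L^m} |N_{L,m}^{(n)}(β_fn)|² dμ_L^m ≤ m^{2n} L^{-n} ∫_{ℝ^n}∫_{ℝ^n} |β_fn|² dq' dμ̆^n(p')`. -/
theorem symmetrize_L2_bound (β : ℝ) (hβ : 0 < β) (n m : ℕ) (hnm : n < m)
    (L : ℝ) (hL : 0 < L) (βfn : SchwartzMap ((Fin n → ℝ) × (Fin n → ℝ)) ℂ) :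
    (∫ pq, ‖symmetrize n m (fun x => βfn x) pq.1 pq.2‖ ^ 2 ∂(gibbsMeasure β L m)) ≤
      (m : ℝ) ^ (2 * n) / L ^ n *
        ∫ p', (∫ q', ‖βfn (p', q')‖ ^ 2)
          ∂(Measure.pi fun _ : Fin n => maxwellMeasure β) := by
  classical
  haveI hmp : IsProbabilityMeasure (maxwellMeasure β) := maxwell_prob hβ
  -- Schwartz decay bound
  set C0 : ℝ := 2 ^ (n + 1) *
    (Finset.Iic ((n + 1, 0) : ℕ × ℕ)).sup (fun m' => SchwartzMap.seminorm ℝ m'.1 m'.2) βfn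
    with hC0_def
  have hC0 : 0 ≤ C0 :=
    mul_nonneg (by positivity) (apply_nonneg _ _)
  have hdecay : ∀ x : (Fin n → ℝ) × (Fin n → ℝ), (1 + ‖x‖) ^ (n + 1) * ‖βfn x‖ ≤ C0 := by
    intro x
    have h := SchwartzMap.one_add_le_sup_seminorm_apply (𝕜 := ℝ) (m := ((n + 1, 0) : ℕ × ℕ))
      le_rfl le_rfl βfn x
    rwa [norm_iteratedFDeriv_zero] at h
  have hq : ∀ (p' q' : Fin n → ℝ),
      ‖βfn (p', q')‖ ^ 2 ≤ C0 ^ 2 * ((1 + ‖q'‖) ^ (2 * (n + 1)))⁻¹ := by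
    intro p' q'
    have hb : (0:ℝ) < (1 + ‖q'‖) ^ (n + 1) := by positivity
    have h1 : (1 + ‖q'‖) ^ (n + 1) * ‖βfn (p', q')‖ ≤ C0 := by
      refine le_trans ?_ (hdecay (p', q'))
      have hle : ‖q'‖ ≤ ‖((p', q') : (Fin n → ℝ) × (Fin n → ℝ))‖ := norm_snd_le ((p', q'))
      gcongr
    have h2 : ‖βfn (p', q')‖ ≤ C0 / (1 + ‖q'‖) ^ (n + 1) := by
      rw [le_div_iff₀ hb, mul_comm]
      exact h1
    calc ‖βfn (p', q')‖ ^ 2 ≤ (C0 / (1 + ‖q'‖) ^ (n + 1)) ^ 2 :=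
          pow_le_pow_left₀ (norm_nonneg _) h2 2
      _ = C0 ^ 2 * ((1 + ‖q'‖) ^ (2 * (n + 1)))⁻¹ := by
          rw [div_pow, ← pow_mul, mul_comm (n + 1) 2, div_eq_mul_inv]
  -- integrable majorant
  have hfr : (Module.finrank ℝ (Fin n → ℝ) : ℝ) < ((2 * (n + 1) : ℕ) : ℝ) := by
    rw [Module.finrank_fin_fun]
    push_cast
    linarith
  have hmaj0 : Integrable (fun q' : Fin n → ℝ => ((1 + ‖q'‖) ^ (2 * (n + 1)))⁻¹) := by
    have h := integrable_one_add_norm (E := Fin n → ℝ) (μ := volume) hfr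
    refine h.congr (Filter.Eventually.of_forall fun q' => ?_)
    have hbeta : ((1:ℝ) + ‖q'‖) ^ (-((2 * (n + 1) : ℕ) : ℝ))
        = (((1:ℝ) + ‖q'‖) ^ (2 * (n + 1)))⁻¹ := by
      rw [Real.rpow_neg (by positivity), Real.rpow_natCast]
    simpa using hbeta
  have hmaj : Integrable (fun q' : Fin n → ℝ =>
      C0 ^ 2 * ((1 + ‖q'‖) ^ (2 * (n + 1)))⁻¹) := hmaj0.const_mul _
  -- slice integrability
  have hslice : ∀ p' : Fin n → ℝ, Integrable (fun q' => ‖βfn (p', q')‖ ^ 2) := by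
    intro p'
    refine hmaj.mono' ?_ (Filter.Eventually.of_forall fun q' => ?_)
    · exact (((βfn.continuous.comp
        (continuous_const.prodMk continuous_id)).norm.pow 2)).aestronglyMeasurable
    · rw [Real.norm_of_nonneg (by positivity)]
      exact hq p' q'
  -- the inner Bochner integral as a function
  set W : (Fin n → ℝ) → ℝ := fun p' => ∫ q', ‖βfn (p', q')‖ ^ 2 with hW_def
  have hWnonneg : ∀ p', 0 ≤ W p' := fun p' => integral_nonneg fun q' => by positivity
  have hWmeas : StronglyMeasurable W := by
    apply MeasureTheory.StronglyMeasurable.integral_prod_right'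
      (f := fun x : ((Fin n → ℝ) × (Fin n → ℝ)) => ‖βfn x‖ ^ 2)
    exact (βfn.continuous.norm.pow 2).stronglyMeasurable
  have hWle : ∀ p', W p' ≤ ∫ q' : Fin n → ℝ, C0 ^ 2 * ((1 + ‖q'‖) ^ (2 * (n + 1)))⁻¹ :=
    fun p' => integral_mono (hslice p') hmaj fun q' => hq p' q'
  have hWint : Integrable W (Measure.pi fun _ : Fin n => maxwellMeasure β) := by
    refine Integrable.mono' (integrable_const
        (∫ q' : Fin n → ℝ, C0 ^ 2 * ((1 + ‖q'‖) ^ (2 * (n + 1)))⁻¹))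
      hWmeas.aestronglyMeasurable (Filter.Eventually.of_forall fun p' => ?_)
    rw [Real.norm_of_nonneg (hWnonneg p')]
    exact hWle p'
  have hIWnonneg : 0 ≤ ∫ p', W p' ∂(Measure.pi fun _ : Fin n => maxwellMeasure β) :=
    integral_nonneg hWnonneg
  -- ENNReal side
  set g : ((Fin n → ℝ) × (Fin n → ℝ)) → ℝ≥0∞ := fun x => ENNReal.ofReal (‖βfn x‖ ^ 2)
    with hg_def
  have hg : Measurable g := ((βfn.continuous.norm.pow 2).measurable).ennreal_ofReal
  have hVW : ∀ p' : Fin n → ℝ, (∫⁻ q', g (p', q')) = ENNReal.ofReal (W p') := fun p' =>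
    (ofReal_integral_eq_lintegral_ofReal (hslice p')
      (Filter.Eventually.of_forall fun q' => by positivity)).symm
  have hJ : (∫⁻ p', (∫⁻ q', g (p', q')) ∂(Measure.pi fun _ : Fin n => maxwellMeasure β))
      = ENNReal.ofReal (∫ p', W p' ∂(Measure.pi fun _ : Fin n => maxwellMeasure β)) := by
    simp_rw [hVW]
    exact (ofReal_integral_eq_lintegral_ofReal hWint
      (Filter.Eventually.of_forall fun p' => hWnonneg p')).symm
  -- the symmetrization as a sum
  set inj : Finset (Fin n → Fin m) :=
    Finset.univ.filter (fun j : Fin n → Fin m => Function.Injective j) with hinj_def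
  have hcard : (inj.card : ℝ≥0∞) ≤ (m : ℝ≥0∞) ^ n := by
    have h1 : inj.card ≤ m ^ n := by
      refine le_trans (Finset.card_filter_le _ _) ?_
      simp [Finset.card_univ]
    calc (inj.card : ℝ≥0∞) ≤ ((m ^ n : ℕ) : ℝ≥0∞) := Nat.cast_le.mpr h1
      _ = (m : ℝ≥0∞) ^ n := by push_cast; rfl
  have hsymm_cont : Continuous fun pq : (Fin m → ℝ) × (Fin m → ℝ) =>
      symmetrize n m (fun x => βfn x) pq.1 pq.2 := by
    unfold symmetrize
    apply continuous_finset_sum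
    intro j _
    exact βfn.continuous.comp ((continuous_pi fun i =>
      (continuous_apply (j i)).comp continuous_fst).prodMk
      (continuous_pi fun i => (continuous_apply (j i)).comp continuous_snd))
  have hptwise : ∀ pq : (Fin m → ℝ) × (Fin m → ℝ),
      ENNReal.ofReal (‖symmetrize n m (fun x => βfn x) pq.1 pq.2‖ ^ 2)
        ≤ (inj.card : ℝ≥0∞) * ∑ j ∈ inj, g (pq.1 ∘ j, pq.2 ∘ j) := by
    intro pq
    have h1 : ‖symmetrize n m (fun x => βfn x) pq.1 pq.2‖ ^ 2
        ≤ (∑ j ∈ inj, ‖βfn (pq.1 ∘ j, pq.2 ∘ j)‖) ^ 2 := by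
      apply pow_le_pow_left₀ (norm_nonneg _)
      exact norm_sum_le _ _
    have h2 : (∑ j ∈ inj, ‖βfn (pq.1 ∘ j, pq.2 ∘ j)‖) ^ 2
        ≤ (inj.card : ℝ) * ∑ j ∈ inj, ‖βfn (pq.1 ∘ j, pq.2 ∘ j)‖ ^ 2 :=
      sq_sum_le_card_mul_sum_sq
    calc ENNReal.ofReal (‖symmetrize n m (fun x => βfn x) pq.1 pq.2‖ ^ 2)
        ≤ ENNReal.ofReal ((inj.card : ℝ) * ∑ j ∈ inj, ‖βfn (pq.1 ∘ j, pq.2 ∘ j)‖ ^ 2) :=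
          ENNReal.ofReal_le_ofReal (h1.trans h2)
      _ = (inj.card : ℝ≥0∞) * ∑ j ∈ inj, g (pq.1 ∘ j, pq.2 ∘ j) := by
          rw [ENNReal.ofReal_mul (Nat.cast_nonneg _), ENNReal.ofReal_natCast,
            ENNReal.ofReal_sum_of_nonneg (fun j _ => by positivity)]
  have hgj : ∀ j : Fin n → Fin m,
      Measurable fun pq : (Fin m → ℝ) × (Fin m → ℝ) => g (pq.1 ∘ j, pq.2 ∘ j) := by
    intro j
    apply hg.comp
    apply Measurable.prod
    · exact measurable_pi_lambda _ fun i => (measurable_pi_apply (j i)).comp measurable_fst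
    · exact measurable_pi_lambda _ fun i => (measurable_pi_apply (j i)).comp measurable_snd
  -- main chain of inequalities in ℝ≥0∞
  set J : ℝ≥0∞ :=
    ∫⁻ p', (∫⁻ q', g (p', q')) ∂(Measure.pi fun _ : Fin n => maxwellMeasure β) with hJ_def
  have hmain : (∫⁻ pq, ENNReal.ofReal (‖symmetrize n m (fun x => βfn x) pq.1 pq.2‖ ^ 2)
        ∂(gibbsMeasure β L m))
      ≤ (m : ℝ≥0∞) ^ (2 * n) * (ENNReal.ofReal ((L ^ n)⁻¹) * J) := by
    calc (∫⁻ pq, ENNReal.ofReal (‖symmetrize n m (fun x => βfn x) pq.1 pq.2‖ ^ 2)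
          ∂(gibbsMeasure β L m))
        ≤ ∫⁻ pq, (inj.card : ℝ≥0∞) * ∑ j ∈ inj, g (pq.1 ∘ j, pq.2 ∘ j)
            ∂(gibbsMeasure β L m) := lintegral_mono hptwise
      _ = (inj.card : ℝ≥0∞) * ∑ j ∈ inj,
            ∫⁻ pq, g (pq.1 ∘ j, pq.2 ∘ j) ∂(gibbsMeasure β L m) := by
          rw [lintegral_const_mul _ (Finset.measurable_sum _ fun j _ => hgj j),
            lintegral_finset_sum _ fun j _ => hgj j]
      _ ≤ (inj.card : ℝ≥0∞) * ∑ _j ∈ inj, (ENNReal.ofReal ((L ^ n)⁻¹) * J) := by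
          apply mul_le_mul_right
          apply Finset.sum_le_sum
          intro j hjmem
          exact key_bound hβ hL hnm.le ((Finset.mem_filter.mp hjmem).2) hg
      _ = (inj.card : ℝ≥0∞) * ((inj.card : ℝ≥0∞) * (ENNReal.ofReal ((L ^ n)⁻¹) * J)) := by
          rw [Finset.sum_const, nsmul_eq_mul]
      _ ≤ (m : ℝ≥0∞) ^ n * ((m : ℝ≥0∞) ^ n * (ENNReal.ofReal ((L ^ n)⁻¹) * J)) := by
          exact mul_le_mul' hcard (mul_le_mul' hcard le_rfl)
      _ = (m : ℝ≥0∞) ^ (2 * n) * (ENNReal.ofReal ((L ^ n)⁻¹) * J) := by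
          rw [two_mul, pow_add, mul_assoc]
  -- convert to Bochner integrals
  rw [integral_eq_lintegral_of_nonneg_ae
    (f := fun pq : (Fin m → ℝ) × (Fin m → ℝ) => ‖symmetrize n m (fun x => βfn x) pq.1 pq.2‖ ^ 2)
    (Filter.Eventually.of_forall fun pq => by positivity)
    ((hsymm_cont.norm.pow 2).aestronglyMeasurable)]
  have hfin : (m : ℝ≥0∞) ^ (2 * n) * (ENNReal.ofReal ((L ^ n)⁻¹) * J) ≠ ⊤ := by
    apply ENNReal.mul_ne_top
    · exact ENNReal.pow_ne_top (ENNReal.natCast_ne_top m)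
    · rw [hJ]
      exact ENNReal.mul_ne_top ENNReal.ofReal_ne_top ENNReal.ofReal_ne_top
  refine le_trans (ENNReal.toReal_mono hfin hmain) ?_
  rw [hJ, ENNReal.toReal_mul, ENNReal.toReal_mul, ENNReal.toReal_pow,
    ENNReal.toReal_natCast, ENNReal.toReal_ofReal (by positivity),
    ENNReal.toReal_ofReal hIWnonneg]
  rw [div_eq_mul_inv, mul_assoc]
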